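/- Let Λ₁, Λ₂ ⊂ ℝⁿ be convex and let Φ₁, Φ₂ : ℝⁿ → ℝ be C² on neighbourhoods of Λ₁, Λ₂ with ‖∇²Φ_j‖_{L^∞(Λ_j)} < ∞ (the supremum of the Hessian operator norm over Λ_j), and let A₁, A₂ > 0. Assume: (1) |∇Φ₁(ξ) − ∇Φ₂(η)| ≥ A₁ for all ξ ∈ Λ₁ and η ∈ Λ₂; (2) for j = 1, 2, every 𝔥 ∈ ℝ × ℝⁿ, and all ξ, ξ' ∈ Σ_j(𝔥) with ξ ≠ ξ', |(∇Φ_j(ξ) − ∇Φ_j(ξ')) · (ξ − ξ')/|ξ − ξ'|| ≥ A₂ |ξ − ξ'|; (3) diam(Λ₁) + diam(Λ₂) ≤ A₁A₂ / (2 (‖∇²Φ₁‖_{L^∞(Λ₁)} + ‖∇²Φ₂‖_{L^∞(Λ₂)})²). Then condition (A1) holds with D₁ = A₁A₂/2; that is, for every {j,k} = {1,2}, every 𝔥 ∈ ℝ × ℝⁿ, all ξ, ξ' ∈ Σ_j(𝔥), and every η ∈ Λ_k, |(∇Φ_j(ξ) − ∇Φ_j(ξ')) ∧ (∇Φ_j(ξ)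 − ∇Φ_k(η))| ≥ (A₁A₂/2) |ξ − ξ'|. -/

import Mathlib

open MeasureTheory Filter
open scoped ENNReal RealInnerProductSpace FourierTransform

noncomputable section

abbrev Euc (n : ℕ) : Type := EuclideanSpace ℝ (Fin n)

/-- The wedge (cross-product magnitude) `|x ∧ y| = (|x|²|y|² − (x·y)²)^{1/2}`. -/
def wedge {F : Type*} [NormedAddCommGroup F] [InnerProductSpace ℝ F] (x y : F) : ℝ :=
  Real.sqrt (‖x‖ ^ 2 * ‖y‖ ^ 2 - ⟪x, y⟫ ^ 2)

/-- The surface `Σ_j(𝔥) = {ξ ∈ Λ_j ∩ (Λ_k + h) : Φ_j(ξ) = Φ_k(ξ − h) + a}`. -/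
def SigmaSet {n : ℕ} (Λj Λk : Set (Euc n)) (Φj Φk : Euc n → ℝ) (a : ℝ) (h : Euc n) :
    Set (Euc n) :=
  {ξ | ξ ∈ Λj ∧ ξ - h ∈ Λk ∧ Φj ξ = Φk (ξ - h) + a}

/-- Condition (A1) for the ordered pair `(j, k)`. -/
def CondA1 {n : ℕ} (Λj Λk : Set (Euc n)) (Φj Φk : Euc n → ℝ) (D₁ : ℝ) : Prop :=
  ∀ (a : ℝ) (h : Euc n), ∀ ξ ∈ SigmaSet Λj Λk Φj Φk a h, ∀ ξ' ∈ SigmaSet Λj Λk Φj Φk a h,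
    ∀ η ∈ Λk,
      D₁ * ‖ξ - ξ'‖ ≤
        wedge (gradient Φj ξ - gradient Φj ξ') (gradient Φj ξ - gradient Φk η)

/-- Condition (A2): `Φ` is `C^N` on a neighbourhood of `Λ` with all derivatives of order
`1 ≤ i ≤ N` bounded by `D₂` on `Λ`. -/
def CondA2 {n : ℕ} (N : ℕ) (Λ : Set (Euc n)) (Φ : Euc n → ℝ) (D₂ : ℝ) : Prop :=
  ∃ U : Set (Euc n), IsOpen U ∧ Λ ⊆ U ∧ ContDiffOn ℝ N Φ U ∧
    ∀ i : ℕ, 1 ≤ i → i ≤ N → ∀ ξ ∈ Λ, ‖iteratedFDeriv ℝ i Φ ξ‖ ≤ D₂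

/-- Assumption A on `(Λ₁, Λ₂)` with constants `D₁, D₂, N`. -/
def AssumptionA {n : ℕ} (N : ℕ) (D₁ D₂ : ℝ) (Λ₁ Λ₂ : Set (Euc n)) (Φ₁ Φ₂ : Euc n → ℝ) :
    Prop :=
  CondA1 Λ₁ Λ₂ Φ₁ Φ₂ D₁ ∧ CondA1 Λ₂ Λ₁ Φ₂ Φ₁ D₁ ∧ CondA2 N Λ₁ Φ₁ D₂ ∧ CondA2 N Λ₂ Φ₂ D₂

/-- The annulus `{1/16 ≤ |ξ| ≤ 16}`. -/
def Annulus (n : ℕ) : Set (Euc n) := {ξ | 1 / 16 ≤ ‖ξ‖ ∧ ‖ξ‖ ≤ 16}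

lemma wedge_nonneg {F : Type*} [NormedAddCommGroup F] [InnerProductSpace ℝ F] (x y : F) :
    0 ≤ wedge x y := Real.sqrt_nonneg _

lemma key_wedge {F : Type*} [NormedAddCommGroup F] [InnerProductSpace ℝ F]
    (u v e : F) (he : ‖e‖ = 1) (hv : v ≠ 0) :
    |⟪u, e⟫| * ‖v‖ - ‖u‖ * |⟪v, e⟫| ≤ wedge u v := by
  have hv2 : (0:ℝ) < ‖v‖ := norm_pos_iff.mpr hv
  have hv2' : ‖v‖ ^ 2 ≠ 0 := by positivity
  set r : ℝ := ⟪u, v⟫ / ‖v‖ ^ 2 with hr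
  set u' : F := u - r • v with hu'
  have hvv : ⟪v, v⟫ = ‖v‖ ^ 2 := real_inner_self_eq_norm_sq v
  have hnu' : ‖u'‖ ^ 2 = ‖u‖ ^ 2 - ⟪u, v⟫ ^ 2 / ‖v‖ ^ 2 := by
    rw [hu', norm_sub_sq_real, real_inner_smul_right, norm_smul, Real.norm_eq_abs]
    rw [mul_pow, sq_abs, hr]
    field_simp
    ring
  have hwedge : wedge u v = ‖v‖ * ‖u'‖ := by
    have h1 : ‖u‖ ^ 2 * ‖v‖ ^ 2 - ⟪u, v⟫ ^ 2 = (‖v‖ * ‖u'‖) ^ 2 := by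
      rw [mul_pow, hnu']; field_simp
    rw [wedge, h1, Real.sqrt_sq (by positivity)]
  set w : F := e - (⟪v, e⟫ / ‖v‖ ^ 2) • v with hw
  have hvw : ⟪v, w⟫ = 0 := by
    rw [hw, inner_sub_right, real_inner_smul_right, hvv]
    field_simp
    ring
  have hnw : ‖w‖ ^ 2 = 1 - ⟪v, e⟫ ^ 2 / ‖v‖ ^ 2 := by
    rw [hw, norm_sub_sq_real, real_inner_smul_right, norm_smul, Real.norm_eq_abs, mul_pow,
      sq_abs]
    rw [real_inner_comm e v, he]
    field_simp
    ring
  have hw1 : ‖w‖ ≤ 1 := by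
    nlinarith [norm_nonneg w, sq_nonneg (⟪v, e⟫ / ‖v‖), sq_abs ⟪v,e⟫,
      div_nonneg (sq_nonneg ⟪v, e⟫) (sq_nonneg ‖v‖)]
  have huw : ⟪u, w⟫ = ⟪u', w⟫ := by
    rw [hu', inner_sub_left, real_inner_smul_left, hvw]
    ring
  have habs : |⟪u, w⟫| ≤ ‖u'‖ := by
    rw [huw]
    calc |⟪u', w⟫| ≤ ‖u'‖ * ‖w‖ := abs_real_inner_le_norm u' w
    _ ≤ ‖u'‖ * 1 := by nlinarith [norm_nonneg u']
    _ = ‖u'‖ := mul_one _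
  have hue : ⟪u, w⟫ = ⟪u, e⟫ - (⟪v, e⟫ / ‖v‖ ^ 2) * ⟪u, v⟫ := by
    rw [hw, inner_sub_right, real_inner_smul_right]
  have hCS : |⟪u, v⟫| ≤ ‖u‖ * ‖v‖ := abs_real_inner_le_norm u v
  have h2 : |⟪u, e⟫| ≤ ‖u'‖ + |⟪v, e⟫| * ‖u‖ / ‖v‖ := by
    have : |⟪u, e⟫| ≤ |⟪u, w⟫| + |⟪v, e⟫| * |⟪u, v⟫| / ‖v‖ ^ 2 := by
      have := abs_sub_abs_le_abs_sub ⟪u, e⟫ ((⟪v, e⟫ / ‖v‖ ^ 2) * ⟪u, v⟫)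
      rw [← hue] at this
      have h3 : |(⟪v, e⟫ / ‖v‖ ^ 2) * ⟪u, v⟫| = |⟪v, e⟫| * |⟪u, v⟫| / ‖v‖ ^ 2 := by
        rw [abs_mul, abs_div, abs_pow, abs_norm]; ring
      linarith [h3 ▸ this]
    refine this.trans ?_
    have : |⟪v, e⟫| * |⟪u, v⟫| / ‖v‖ ^ 2 ≤ |⟪v, e⟫| * ‖u‖ / ‖v‖ := by
      rw [div_le_div_iff₀ (by positivity) hv2]
      nlinarith [mul_le_mul_of_nonneg_left hCS (mul_nonneg (abs_nonneg (⟪v, e⟫ : ℝ)) hv2.le)]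
    linarith
  rw [hwedge]
  have := mul_le_mul_of_nonneg_right h2 hv2.le
  have hexp : (‖u'‖ + |⟪v, e⟫| * ‖u‖ / ‖v‖) * ‖v‖ = ‖u'‖ * ‖v‖ + |⟪v, e⟫| * ‖u‖ := by
    field_simp
  nlinarith [this]

lemma inner_grad {n : ℕ} (f : Euc n → ℝ) (x v : Euc n) :
    ⟪gradient f x, v⟫ = fderiv ℝ f x v :=
  InnerProductSpace.toDual_symm_apply

lemma grad_diffAt {n : ℕ} {Φ : Euc n → ℝ} {U : Set (Euc n)} (hUo : IsOpen U)
    (hΦ : ContDiffOn ℝ 2 Φ U) {x : Euc n} (hx : x ∈ U) :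
    DifferentiableAt ℝ (gradient Φ) x := by
  have h1 : ContDiffOn ℝ 1 (fderiv ℝ Φ) U := hΦ.fderiv_of_isOpen hUo (by norm_num)
  have h2 : DifferentiableAt ℝ (fderiv ℝ Φ) x :=
    (h1.differentiableOn one_ne_zero).differentiableAt (hUo.mem_nhds hx)
  exact ((InnerProductSpace.toDual ℝ (Euc n)).symm.differentiableAt).comp x h2

set_option maxHeartbeats 1000000 in
lemma condA1_of {n : ℕ} (Λj Λk : Set (Euc n)) (hcj : Convex ℝ Λj) (hck : Convex ℝ Λk)
    (Φj Φk : Euc n → ℝ)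
    (hUj : ∃ U : Set (Euc n), IsOpen U ∧ Λj ⊆ U ∧ ContDiffOn ℝ 2 Φj U)
    (hUk : ∃ U : Set (Euc n), IsOpen U ∧ Λk ⊆ U ∧ ContDiffOn ℝ 2 Φk U)
    (Hj Hk : ℝ)
    (hHj : ∀ ξ ∈ Λj, ‖fderiv ℝ (gradient Φj) ξ‖ ≤ Hj)
    (hHk : ∀ ξ ∈ Λk, ‖fderiv ℝ (gradient Φk) ξ‖ ≤ Hk)
    (A₁ A₂ : ℝ) (hA₁ : 0 < A₁) (hA₂ : 0 < A₂)
    (htrans : ∀ ξ ∈ Λj, ∀ η ∈ Λk, A₁ ≤ ‖gradient Φj ξ - gradient Φk η‖)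
    (hcurv : ∀ (a : ℝ) (h : Euc n), ∀ ξ ∈ SigmaSet Λj Λk Φj Φk a h,
        ∀ ξ' ∈ SigmaSet Λj Λk Φj Φk a h, ξ ≠ ξ' →
          A₂ * ‖ξ - ξ'‖ ≤ |⟪gradient Φj ξ - gradient Φj ξ', ξ - ξ'⟫| / ‖ξ - ξ'‖)
    (hdiam : EMetric.diam Λj + EMetric.diam Λk ≤
        ENNReal.ofReal (A₁ * A₂ / (2 * (Hj + Hk) ^ 2))) :
    CondA1 Λj Λk Φj Φk (A₁ * A₂ / 2) := by
  obtain ⟨Uj, hUjo, hUjs, hUjc⟩ := hUj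
  obtain ⟨Uk, hUko, hUks, hUkc⟩ := hUk
  intro a h ξ hξ ξ' hξ' η hη
  obtain ⟨hξj, hξhk, hξa⟩ := hξ
  obtain ⟨hξ'j, hξ'hk, hξ'a⟩ := hξ'
  by_cases hne : ξ = ξ'
  · subst hne
    rw [sub_self, norm_zero, mul_zero]
    exact wedge_nonneg _ _
  have hdpos : (0:ℝ) < ‖ξ - ξ'‖ := by
    rw [norm_pos_iff]; exact sub_ne_zero.mpr hne
  set d : ℝ := ‖ξ - ξ'‖ with hd
  set u : Euc n := gradient Φj ξ - gradient Φj ξ' with hu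
  set v : Euc n := gradient Φj ξ - gradient Φk η with hvdef
  set e : Euc n := d⁻¹ • (ξ - ξ') with hedef
  have he : ‖e‖ = 1 := by
    rw [hedef, norm_smul, Real.norm_eq_abs, abs_inv, abs_of_pos hdpos, ← hd,
      inv_mul_cancel₀ hdpos.ne']
  have habs_e : ∀ z : Euc n, |⟪z, e⟫| = d⁻¹ * |⟪z, ξ - ξ'⟫| := by
    intro z
    rw [hedef, real_inner_smul_right, abs_mul, abs_inv, abs_of_pos hdpos]
  have hue : A₂ * d ≤ |⟪u, e⟫| := by
    have h1 := hcurv a h ξ ⟨hξj, hξhk, hξa⟩ ξ' ⟨hξ'j, hξ'hk, hξ'a⟩ hne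
    rw [habs_e u]
    calc A₂ * d ≤ |⟪u, ξ - ξ'⟫| / d := h1
    _ = d⁻¹ * |⟪u, ξ - ξ'⟫| := by ring
  have hHj0 : 0 ≤ Hj := le_trans (norm_nonneg _) (hHj ξ hξj)
  have hHk0 : 0 ≤ Hk := le_trans (norm_nonneg _) (hHk _ hξhk)
  have lipj : ∀ x ∈ Λj, ∀ y ∈ Λj, ‖gradient Φj x - gradient Φj y‖ ≤ Hj * ‖x - y‖ := by
    intro x hx y hy
    exact Convex.norm_image_sub_le_of_norm_fderiv_le
      (fun z hz => grad_diffAt hUjo hUjc (hUjs hz)) hHj hcj hy hx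
  have lipk : ∀ x ∈ Λk, ∀ y ∈ Λk, ‖gradient Φk x - gradient Φk y‖ ≤ Hk * ‖x - y‖ := by
    intro x hx y hy
    exact Convex.norm_image_sub_le_of_norm_fderiv_le
      (fun z hz => grad_diffAt hUko hUkc (hUks hz)) hHk hck hy hx
  have hnu : ‖u‖ ≤ Hj * d := lipj ξ hξj ξ' hξ'j
  have hvA : A₁ ≤ ‖v‖ := htrans ξ hξj η hη
  have hv0 : v ≠ 0 := by
    intro h0
    rw [h0, norm_zero] at hvA
    linarith
  have hHjA : A₂ ≤ Hj := by
    have h1 : |⟪u, e⟫| ≤ ‖u‖ := by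
      calc |⟪u, e⟫| ≤ ‖u‖ * ‖e‖ := abs_real_inner_le_norm u e
      _ = ‖u‖ := by rw [he, mul_one]
    have h2 : A₂ * d ≤ Hj * d := hue.trans (h1.trans hnu)
    exact le_of_mul_le_mul_right (by linarith) hdpos
  have hS : 0 < Hj + Hk := by linarith
  set dj : ℝ := (EMetric.diam Λj).toReal with hdj
  set dk : ℝ := (EMetric.diam Λk).toReal with hdk
  have hjfin : EMetric.diam Λj ≠ ⊤ :=
    ne_top_of_le_ne_top ENNReal.ofReal_ne_top (le_trans le_self_add hdiam)
  have hkfin : EMetric.diam Λk ≠ ⊤ :=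
    ne_top_of_le_ne_top ENNReal.ofReal_ne_top (le_trans le_add_self hdiam)
  have hsum : dj + dk ≤ A₁ * A₂ / (2 * (Hj + Hk) ^ 2) := by
    have h1 := ENNReal.toReal_le_of_le_ofReal (by positivity) hdiam
    rwa [ENNReal.toReal_add hjfin hkfin] at h1
  have hdj0 : 0 ≤ dj := ENNReal.toReal_nonneg
  have hdk0 : 0 ≤ dk := ENNReal.toReal_nonneg
  have hdistj : ∀ x ∈ Λj, ∀ y ∈ Λj, ‖x - y‖ ≤ dj := by
    intro x hx y hy
    rw [← dist_eq_norm, dist_edist]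
    exact ENNReal.toReal_mono hjfin (EMetric.edist_le_diam_of_mem hx hy)
  have hdistk : ∀ x ∈ Λk, ∀ y ∈ Λk, ‖x - y‖ ≤ dk := by
    intro x hx y hy
    rw [← dist_eq_norm, dist_edist]
    exact ENNReal.toReal_mono hkfin (EMetric.edist_le_diam_of_mem hx hy)
  set γ : ℝ → Euc n := fun t => ξ' + t • (ξ - ξ') with hγ
  have hγj : ∀ t ∈ Set.Icc (0:ℝ) 1, γ t ∈ Λj := by
    intro t ht
    have h2 := hcj hξ'j hξj (by linarith [ht.2] : (0:ℝ) ≤ 1 - t) ht.1 (by ring)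
    have h3 : γ t = (1 - t) • ξ' + t • ξ := by rw [hγ]; module
    rwa [h3]
  have hγk : ∀ t ∈ Set.Icc (0:ℝ) 1, γ t - h ∈ Λk := by
    intro t ht
    have h2 := hck hξ'hk hξhk (by linarith [ht.2] : (0:ℝ) ≤ 1 - t) ht.1 (by ring)
    have h3 : γ t - h = (1 - t) • (ξ' - h) + t • (ξ - h) := by rw [hγ]; module
    rwa [h3]
  set g : ℝ → ℝ := fun t => Φj (γ t) - Φk (γ t - h) with hg
  set g' : ℝ → ℝ := fun t => fderiv ℝ Φj (γ t) (ξ - ξ') - fderiv ℝ Φk (γ t - h) (ξ - ξ')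
    with hg'
  have hderiv : ∀ t ∈ Set.Icc (0:ℝ) 1, HasDerivAt g (g' t) t := by
    intro t ht
    have hγ' : HasDerivAt γ (ξ - ξ') t := by
      have h1 : HasDerivAt (fun s : ℝ => s • (ξ - ξ')) ((1:ℝ) • (ξ - ξ')) t :=
        (hasDerivAt_id t).smul_const (ξ - ξ')
      simpa [hγ] using h1.const_add ξ'
    have hj' : HasFDerivAt Φj (fderiv ℝ Φj (γ t)) (γ t) :=
      ((hUjc.differentiableOn (by norm_num)).differentiableAt
        (hUjo.mem_nhds (hUjs (hγj t ht)))).hasFDerivAt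
    have hk' : HasFDerivAt Φk (fderiv ℝ Φk (γ t - h)) (γ t - h) :=
      ((hUkc.differentiableOn (by norm_num)).differentiableAt
        (hUko.mem_nhds (hUks (hγk t ht)))).hasFDerivAt
    have hc1 : HasDerivAt (fun s => Φj (γ s)) (fderiv ℝ Φj (γ t) (ξ - ξ')) t :=
      hj'.comp_hasDerivAt t hγ'
    have hγh : HasDerivAt (fun s => γ s - h) (ξ - ξ') t := hγ'.sub_const h
    have hc2 : HasDerivAt (fun s => Φk (γ s - h)) (fderiv ℝ Φk (γ t - h) (ξ - ξ')) t :=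
      hk'.comp_hasDerivAt t hγh
    exact hc1.sub hc2
  have hγ0 : γ 0 = ξ' := by simp [hγ]
  have hγ1 : γ 1 = ξ := by simp [hγ]
  have hg01 : g 0 = g 1 := by
    simp only [hg, hγ0, hγ1]
    rw [hξa, hξ'a]
    ring
  obtain ⟨t₀, ht₀, hg'0⟩ := exists_hasDerivAt_eq_zero zero_lt_one
    (fun t ht => (hderiv t ht).continuousAt.continuousWithinAt) hg01
    (fun t ht => hderiv t (Set.Ioo_subset_Icc_self ht))
  set ζ : Euc n := γ t₀ with hζ
  have ht₀' : t₀ ∈ Set.Icc (0:ℝ) 1 := Set.Ioo_subset_Icc_self ht₀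
  have hζj : ζ ∈ Λj := hγj t₀ ht₀'
  have hζk : ζ - h ∈ Λk := hγk t₀ ht₀'
  have hmid : ⟪gradient Φj ζ - gradient Φk (ζ - h), ξ - ξ'⟫ = 0 := by
    rw [inner_sub_left, inner_grad, inner_grad]
    simpa [hg', hζ] using hg'0
  have hvsplit : v = (gradient Φj ξ - gradient Φj ζ)
      + (gradient Φj ζ - gradient Φk (ζ - h)) + (gradient Φk (ζ - h) - gradient Φk η) := by
    rw [hvdef]; abel
  have hsplit : ⟪v, ξ - ξ'⟫ = ⟪gradient Φj ξ - gradient Φj ζ, ξ - ξ'⟫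
      + ⟪gradient Φk (ζ - h) - gradient Φk η, ξ - ξ'⟫ := by
    rw [hvsplit, inner_add_left, inner_add_left, hmid]
    ring
  have hve : |⟪v, e⟫| ≤ Hj * dj + Hk * dk := by
    have h1 : ‖gradient Φj ξ - gradient Φj ζ‖ ≤ Hj * dj :=
      (lipj ξ hξj ζ hζj).trans (mul_le_mul_of_nonneg_left (hdistj ξ hξj ζ hζj) hHj0)
    have h2 : ‖gradient Φk (ζ - h) - gradient Φk η‖ ≤ Hk * dk :=
      (lipk (ζ - h) hζk η hη).trans
        (mul_le_mul_of_nonneg_left (hdistk (ζ - h) hζk η hη) hHk0)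
    have h3 : |⟪v, ξ - ξ'⟫| ≤ (Hj * dj + Hk * dk) * d := by
      rw [hsplit]
      have hb := abs_real_inner_le_norm (gradient Φj ξ - gradient Φj ζ) (ξ - ξ')
      have hc := abs_real_inner_le_norm (gradient Φk (ζ - h) - gradient Φk η) (ξ - ξ')
      rw [← hd] at hb hc
      have hb' : |⟪gradient Φj ξ - gradient Φj ζ, ξ - ξ'⟫| ≤ Hj * dj * d :=
        hb.trans (mul_le_mul_of_nonneg_right h1 hdpos.le)
      have hc' : |⟪gradient Φk (ζ - h) - gradient Φk η, ξ - ξ'⟫| ≤ Hk * dk * d :=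
        hc.trans (mul_le_mul_of_nonneg_right h2 hdpos.le)
      calc |⟪gradient Φj ξ - gradient Φj ζ, ξ - ξ'⟫
          + ⟪gradient Φk (ζ - h) - gradient Φk η, ξ - ξ'⟫|
          ≤ |⟪gradient Φj ξ - gradient Φj ζ, ξ - ξ'⟫|
            + |⟪gradient Φk (ζ - h) - gradient Φk η, ξ - ξ'⟫| := abs_add_le _ _
      _ ≤ Hj * dj * d + Hk * dk * d := add_le_add hb' hc'
      _ = (Hj * dj + Hk * dk) * d := by ring
    rw [habs_e]
    calc d⁻¹ * |⟪v, ξ - ξ'⟫| ≤ d⁻¹ * ((Hj * dj + Hk * dk) * d) :=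
      mul_le_mul_of_nonneg_left h3 (inv_nonneg.mpr hdpos.le)
    _ = Hj * dj + Hk * dk := by field_simp
  have key := key_wedge u v e he hv0
  have hfin1 : A₂ * d * A₁ ≤ |⟪u, e⟫| * ‖v‖ :=
    mul_le_mul hue hvA hA₁.le (abs_nonneg _)
  have hfin2 : ‖u‖ * |⟪v, e⟫| ≤ (Hj * d) * (Hj * dj + Hk * dk) :=
    mul_le_mul hnu hve (abs_nonneg _) (by positivity)
  have hfin3 : (Hj * d) * (Hj * dj + Hk * dk) ≤ A₁ * A₂ / 2 * d := by
    have hS2 : (dj + dk) * (2 * (Hj + Hk) ^ 2) ≤ A₁ * A₂ :=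
      (le_div_iff₀ (by positivity)).mp hsum
    nlinarith [mul_le_mul_of_nonneg_right hS2 hdpos.le,
      mul_nonneg (mul_nonneg hHk0 hHk0) (mul_nonneg hdj0 hdpos.le),
      mul_nonneg (mul_nonneg hHj0 hHk0) (mul_nonneg hdj0 hdpos.le),
      mul_nonneg (mul_nonneg hHj0 hHj0) (mul_nonneg hdk0 hdpos.le),
      mul_nonneg (mul_nonneg hHj0 hHk0) (mul_nonneg hdk0 hdpos.le),
      mul_nonneg (mul_nonneg hHk0 hHk0) (mul_nonneg hdk0 hdpos.le)]
  calc A₁ * A₂ / 2 * ‖ξ - ξ'‖ = A₂ * d * A₁ - A₁ * A₂ / 2 * d := by rw [← hd]; ring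
  _ ≤ |⟪u, e⟫| * ‖v‖ - ‖u‖ * |⟪v, e⟫| := by linarith
  _ ≤ wedge u v := key

/-- **Sufficient condition for (A1) (Lemma 2.1).**  Here `H₁, H₂` are bounds for
`‖∇²Φ₁‖_{L^∞(Λ₁)}`, `‖∇²Φ₂‖_{L^∞(Λ₂)}`. -/
theorem stmt3 {n : ℕ} (Λ₁ Λ₂ : Set (Euc n)) (hc₁ : Convex ℝ Λ₁) (hc₂ : Convex ℝ Λ₂)
    (Φ₁ Φ₂ : Euc n → ℝ)
    (hU₁ : ∃ U : Set (Euc n), IsOpen U ∧ Λ₁ ⊆ U ∧ ContDiffOn ℝ 2 Φ₁ U)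
    (hU₂ : ∃ U : Set (Euc n), IsOpen U ∧ Λ₂ ⊆ U ∧ ContDiffOn ℝ 2 Φ₂ U)
    (H₁ H₂ : ℝ)
    (hH₁ : ∀ ξ ∈ Λ₁, ‖fderiv ℝ (gradient Φ₁) ξ‖ ≤ H₁)
    (hH₂ : ∀ ξ ∈ Λ₂, ‖fderiv ℝ (gradient Φ₂) ξ‖ ≤ H₂)
    (A₁ A₂ : ℝ) (hA₁ : 0 < A₁) (hA₂ : 0 < A₂)
    (htrans : ∀ ξ ∈ Λ₁, ∀ η ∈ Λ₂, A₁ ≤ ‖gradient Φ₁ ξ - gradient Φ₂ η‖)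
    (hcurv₁ : ∀ (a : ℝ) (h : Euc n), ∀ ξ ∈ SigmaSet Λ₁ Λ₂ Φ₁ Φ₂ a h,
        ∀ ξ' ∈ SigmaSet Λ₁ Λ₂ Φ₁ Φ₂ a h, ξ ≠ ξ' →
          A₂ * ‖ξ - ξ'‖ ≤ |⟪gradient Φ₁ ξ - gradient Φ₁ ξ', ξ - ξ'⟫| / ‖ξ - ξ'‖)
    (hcurv₂ : ∀ (a : ℝ) (h : Euc n), ∀ ξ ∈ SigmaSet Λ₂ Λ₁ Φ₂ Φ₁ a h,
        ∀ ξ' ∈ SigmaSet Λ₂ Λ₁ Φ₂ Φ₁ a h, ξ ≠ ξ' →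
          A₂ * ‖ξ - ξ'‖ ≤ |⟪gradient Φ₂ ξ - gradient Φ₂ ξ', ξ - ξ'⟫| / ‖ξ - ξ'‖)
    (hdiam : EMetric.diam Λ₁ + EMetric.diam Λ₂ ≤
        ENNReal.ofReal (A₁ * A₂ / (2 * (H₁ + H₂) ^ 2))) :
    CondA1 Λ₁ Λ₂ Φ₁ Φ₂ (A₁ * A₂ / 2) ∧ CondA1 Λ₂ Λ₁ Φ₂ Φ₁ (A₁ * A₂ / 2) := by
  constructor
  · exact condA1_of Λ₁ Λ₂ hc₁ hc₂ Φ₁ Φ₂ hU₁ hU₂ H₁ H₂ hH₁ hH₂ A₁ A₂ hA₁ hA₂ htrans hcurv₁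
      hdiam
  · refine condA1_of Λ₂ Λ₁ hc₂ hc₁ Φ₂ Φ₁ hU₂ hU₁ H₂ H₁ hH₂ hH₁ A₁ A₂ hA₁ hA₂ ?_ hcurv₂ ?_
    · intro ξ hξ η hη
      rw [norm_sub_rev]
      exact htrans η hη ξ hξ
    · rw [add_comm (EMetric.diam Λ₂), add_comm H₂ H₁]
      exact hdiam
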